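/- Let ε > 0 and let G be a simple graph on n vertices with at least n²/4 + εn² edges. Then G contains more than (ε/3)·n³ triangles. -/

import Mathlib

open Classical in
/-- Adjacency matrix of a simple graph, over `ℝ`. -/
noncomputable def adjMat {V : Type*} [Fintype V] (G : SimpleGraph V) : Matrix V V ℝ :=
  Matrix.of fun i j => if G.Adj i j then 1 else 0

/-- Spectral radius (largest eigenvalue) of a finite simple graph: the supremum of the
real spectrum of its adjacency matrix. -/
noncomputable def specRad {V : Type*} [Fintype V] [DecidableEq V]
    (G : SimpleGraph V) : ℝ :=
  sSup (spectrum ℝ (adjMat G))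

/-- Number of edges of a graph. -/
noncomputable def edgeCount {V : Type*} (G : SimpleGraph V) : ℕ := G.edgeSet.ncard

/-- Number of triangles of a graph. -/
noncomputable def triangleCount {V : Type*} (G : SimpleGraph V) : ℕ :=
  {t : Finset V | G.IsNClique 3 t}.ncard

/-- Triangle covering number: minimum size of a vertex set meeting every triangle. -/
noncomputable def triangleCoverNumber {V : Type*} [Fintype V] [DecidableEq V]
    (G : SimpleGraph V) : ℕ :=
  sInf {k | ∃ s : Finset V, s.card = k ∧ ∀ t : Finset V, G.IsNClique 3 t → ∃ v ∈ s, v ∈ t}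

/-- Number of bowties: unordered pairs of triangles sharing exactly one vertex. -/
noncomputable def bowtieCount {V : Type*} [DecidableEq V] (G : SimpleGraph V) : ℕ :=
  {p : Finset (Finset V) | p.card = 2 ∧ (∀ t ∈ p, G.IsNClique 3 t) ∧
    ∀ t₁ ∈ p, ∀ t₂ ∈ p, t₁ ≠ t₂ → (t₁ ∩ t₂).card = 1}.ncard

/-- Complete bipartite graph on `Fin n` with parts `[0, s)` and `[s, n)`. -/
def biGraph (n s : ℕ) : SimpleGraph (Fin n) :=
  SimpleGraph.fromRel (fun i j => (i : ℕ) < s ∧ s ≤ (j : ℕ))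

/-- `K_{s,t}^{+2}`: complete bipartite with two disjoint extra edges `{0,1}`, `{2,3}`
inside the part `[0, s)`. -/
def biGraphPlus2 (n s : ℕ) : SimpleGraph (Fin n) :=
  SimpleGraph.fromRel (fun i j => ((i : ℕ) < s ∧ s ≤ (j : ℕ)) ∨
    ((i : ℕ) = 0 ∧ (j : ℕ) = 1) ∨ ((i : ℕ) = 2 ∧ (j : ℕ) = 3))

/-- `K_{s,t}^{+}`: complete bipartite with one extra edge `{0,1}` inside the part `[0, s)`. -/
def biGraphPlus1 (n s : ℕ) : SimpleGraph (Fin n) :=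
  SimpleGraph.fromRel (fun i j => ((i : ℕ) < s ∧ s ≤ (j : ℕ)) ∨ ((i : ℕ) = 0 ∧ (j : ℕ) = 1))

/-- `K_{s,t}^{++}`: complete bipartite with one extra edge in each part. -/
def biGraphPlusPlus (n s : ℕ) : SimpleGraph (Fin n) :=
  SimpleGraph.fromRel (fun i j => ((i : ℕ) < s ∧ s ≤ (j : ℕ)) ∨
    ((i : ℕ) = 0 ∧ (j : ℕ) = 1) ∨ ((i : ℕ) = s ∧ (j : ℕ) = s + 1))

/-- The friendship graph `F_k`: `k` triangles meeting in the common vertex `0`. -/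
def friendship (k : ℕ) : SimpleGraph (Fin (2 * k + 1)) :=
  SimpleGraph.fromRel (fun a b => ((a : ℕ) = 0 ∧ (b : ℕ) ≠ 0) ∨
    ((a : ℕ) % 2 = 1 ∧ (b : ℕ) = (a : ℕ) + 1))

/-- `G` contains a copy of `H` (a subgraph isomorphic to `H`). -/
def ContainsCopy {α β : Type*} (H : SimpleGraph α) (G : SimpleGraph β) : Prop :=
  ∃ f : α → β, Function.Injective f ∧ ∀ a b, H.Adj a b → G.Adj (f a) (f b)

/-- Number of edges of `G` with both endpoints in `S`. -/
noncomputable def eIn {V : Type*} (G : SimpleGraph V) (S : Finset V) : ℕ :=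
  {e ∈ G.edgeSet | ∀ v ∈ e, v ∈ S}.ncard

/-- Number of edges of `G` with one endpoint in `S` and the other in `T`. -/
noncomputable def eCross {V : Type*} (G : SimpleGraph V) (S T : Finset V) : ℕ :=
  {e ∈ G.edgeSet | ∃ u ∈ S, ∃ v ∈ T, e = s(u, v)}.ncard

/-- `G` is `ε`-far from being bipartite: every spanning subgraph obtained by removing
fewer than `ε` edges is non-bipartite. -/
def FarFromBipartite {V : Type*} (G : SimpleGraph V) (ε : ℝ) : Prop :=
  ∀ G' : SimpleGraph V, G' ≤ G → (edgeCount G : ℝ) - ε < (edgeCount G' : ℝ) →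
    ¬ G'.Colorable 2


section Stmt10Aux

open Finset SimpleGraph

variable {V : Type*} [Fintype V] [DecidableEq V] (G : SimpleGraph V) [DecidableRel G.Adj]

/-- Ordered adjacent pairs. -/
noncomputable def stmt10P : Finset (V × V) := univ.filter (fun p => G.Adj p.1 p.2)

omit [DecidableEq V] in
lemma stmt10_nbr_filter (a : V) :
    univ.filter (fun y => G.Adj a y) = G.neighborFinset a := by
  ext y; simp [mem_neighborFinset]

lemma stmt10_count_key :
    ∑ p ∈ stmt10P G, ((G.neighborFinset p.1 ∩ G.neighborFinset p.2).card)
      = 6 * (G.cliqueFinset 3).card := by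
  classical
  rw [← Finset.card_sigma]
  rw [Finset.card_eq_sum_card_fiberwise
    (f := fun q : (_ : V × V) × V => ({q.1.1, q.1.2, q.2} : Finset V))
    (t := G.cliqueFinset 3) ?_]
  · rw [Finset.sum_congr rfl ?_, Finset.sum_const, smul_eq_mul, mul_comm]
    intro t ht
    rw [mem_cliqueFinset_iff, is3Clique_iff] at ht
    obtain ⟨a, b, c, hab, hac, hbc, rfl⟩ := ht
    have F : ((stmt10P G).sigma fun p => G.neighborFinset p.1 ∩ G.neighborFinset p.2).filter
        (fun q => ({q.1.1, q.1.2, q.2} : Finset V) = {a, b, c})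
        = {⟨(a,b),c⟩, ⟨(a,c),b⟩, ⟨(b,a),c⟩, ⟨(b,c),a⟩, ⟨(c,a),b⟩, ⟨(c,b),a⟩} := by
      ext ⟨⟨x, y⟩, z⟩
      simp only [Finset.mem_filter, Finset.mem_sigma, stmt10P, Finset.mem_insert,
        Finset.mem_singleton, Finset.mem_inter, mem_neighborFinset, mem_filter, mem_univ,
        true_and, Sigma.mk.inj_iff, Prod.mk.injEq, heq_eq_eq]
      constructor
      · rintro ⟨⟨hxy, hxz, hyz⟩, hset⟩
        have hx : x ∈ ({a, b, c} : Finset V) := by rw [← hset]; simp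
        have hy : y ∈ ({a, b, c} : Finset V) := by rw [← hset]; simp
        have hz : z ∈ ({a, b, c} : Finset V) := by rw [← hset]; simp
        simp only [Finset.mem_insert, Finset.mem_singleton] at hx hy hz
        have := hxy.ne; have := hxz.ne; have := hyz.ne
        have := hab.ne; have := hac.ne; have := hbc.ne
        rcases hx with rfl | rfl | rfl <;> rcases hy with rfl | rfl | rfl <;>
          rcases hz with rfl | rfl | rfl <;> simp_all
      · have hs : ∀ u v w : V, G.Adj u v → G.Adj u w → G.Adj v w →
            ({u, v, w} : Finset V) = {a,b,c} →
            ((G.Adj u v ∧ G.Adj u w ∧ G.Adj v w) ∧ ({u,v,w} : Finset V) = {a,b,c}) :=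
          fun u v w h1 h2 h3 h4 => ⟨⟨h1, h2, h3⟩, h4⟩
        rintro (⟨⟨rfl, rfl⟩, rfl⟩ | ⟨⟨rfl, rfl⟩, rfl⟩ | ⟨⟨rfl, rfl⟩, rfl⟩ |
          ⟨⟨rfl, rfl⟩, rfl⟩ | ⟨⟨rfl, rfl⟩, rfl⟩ | ⟨⟨rfl, rfl⟩, rfl⟩)
        · exact hs _ _ _ hab hac hbc rfl
        · refine hs _ _ _ hac hab hbc.symm ?_; ext u; simp; tauto
        · refine hs _ _ _ hab.symm hbc hac ?_; ext u; simp; tauto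
        · refine hs _ _ _ hbc hab.symm hac.symm ?_; ext u; simp; tauto
        · refine hs _ _ _ hac.symm hbc.symm hab ?_; ext u; simp; tauto
        · refine hs _ _ _ hbc.symm hac.symm hab.symm ?_; ext u; simp; tauto
    rw [F]
    have := hab.ne; have := hac.ne; have := hbc.ne
    rw [Finset.card_insert_of_notMem (by simp_all [Sigma.ext_iff, Prod.ext_iff]),
      Finset.card_insert_of_notMem (by simp_all [Sigma.ext_iff, Prod.ext_iff]),
      Finset.card_insert_of_notMem (by simp_all [Sigma.ext_iff, Prod.ext_iff]),
      Finset.card_insert_of_notMem (by simp_all [Sigma.ext_iff, Prod.ext_iff]),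
      Finset.card_insert_of_notMem (by simp_all [Sigma.ext_iff, Prod.ext_iff]),
      Finset.card_singleton]
  · rintro ⟨⟨x, y⟩, z⟩ hq
    simp only [Finset.mem_sigma, stmt10P, Finset.mem_filter, Finset.mem_inter,
      mem_neighborFinset, mem_univ, true_and, Finset.mem_coe] at hq
    rw [Finset.mem_coe, mem_cliqueFinset_iff, is3Clique_iff]
    exact ⟨x, y, z, hq.1, hq.2.1, hq.2.2, rfl⟩

omit [DecidableEq V] in
lemma stmt10_sum_deg_fst : ∑ p ∈ stmt10P G, G.degree p.1 = ∑ v, (G.degree v) ^ 2 := by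
  rw [stmt10P, Finset.sum_filter, Fintype.sum_prod_type]
  refine Finset.sum_congr rfl fun a _ => ?_
  rw [← Finset.sum_filter, stmt10_nbr_filter]
  simp [sq]
  rw [Finset.sum_const_nat (m := G.degree a) (fun _ _ => rfl)]; congr 1

omit [DecidableEq V] in
lemma stmt10_sum_deg_snd : ∑ p ∈ stmt10P G, G.degree p.2 = ∑ v, (G.degree v) ^ 2 := by
  rw [stmt10P, Finset.sum_filter, Fintype.sum_prod_type_right]
  refine Finset.sum_congr rfl fun b _ => ?_
  rw [show (fun a => if G.Adj (a, b).1 (a, b).2 then G.degree (a, b).2 else 0)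
      = fun a => if G.Adj b a then G.degree b else 0 by
    funext a; simp [adj_comm]]
  rw [← Finset.sum_filter, stmt10_nbr_filter]
  simp [sq]

omit [DecidableEq V] in
lemma stmt10_card_P : (stmt10P G).card = ∑ v, G.degree v := by
  rw [stmt10P, Finset.card_filter, Fintype.sum_prod_type]
  refine Finset.sum_congr rfl fun a _ => ?_
  rw [← Finset.card_filter, stmt10_nbr_filter, card_neighborFinset_eq_degree]

lemma stmt10_sum_deg_le : ∑ p ∈ stmt10P G, (G.degree p.1 + G.degree p.2) ≤
    Fintype.card V * (stmt10P G).card +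
      ∑ p ∈ stmt10P G, (G.neighborFinset p.1 ∩ G.neighborFinset p.2).card := by
  calc ∑ p ∈ stmt10P G, (G.degree p.1 + G.degree p.2)
      ≤ ∑ p ∈ stmt10P G, (Fintype.card V +
          (G.neighborFinset p.1 ∩ G.neighborFinset p.2).card) := by
        refine Finset.sum_le_sum fun p _ => ?_
        have h := Finset.card_union_add_card_inter (G.neighborFinset p.1) (G.neighborFinset p.2)
        have h2 : (G.neighborFinset p.1 ∪ G.neighborFinset p.2).card ≤ Fintype.card V :=
          Finset.card_le_univ _
        simp only [card_neighborFinset_eq_degree] at h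
        omega
    _ = _ := by rw [Finset.sum_add_distrib, Finset.sum_const, smul_eq_mul, mul_comm]

end Stmt10Aux

/-- If `ε > 0` and a graph on `n` vertices has at least `n²/4 + εn²` edges,
then it contains more than `(ε/3)·n³` triangles. -/
theorem stmt_10 (n : ℕ) (hn : 1 ≤ n) (ε : ℝ) (hε : 0 < ε) (G : SimpleGraph (Fin n))
    (he : (n : ℝ) ^ 2 / 4 + ε * (n : ℝ) ^ 2 ≤ (edgeCount G : ℝ)) :
    ε / 3 * (n : ℝ) ^ 3 < (triangleCount G : ℝ) := by
  classical
  set e := G.edgeFinset.card with hedef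
  set t := (G.cliqueFinset 3).card with htdef
  have hecount : edgeCount G = e := by
    rw [edgeCount, hedef, ← Set.ncard_coe_finset, SimpleGraph.coe_edgeFinset]
  have htcount : triangleCount G = t := by
    rw [triangleCount, show {s : Finset (Fin n) | G.IsNClique 3 s} = ↑(G.cliqueFinset 3) by
      ext s; simp [SimpleGraph.mem_cliqueFinset_iff], Set.ncard_coe_finset]
  set Q := ∑ v, (G.degree v) ^ 2 with hQdef
  have h1 : ∑ p ∈ stmt10P G, (G.degree p.1 + G.degree p.2) = 2 * Q := by
    rw [Finset.sum_add_distrib, stmt10_sum_deg_fst, stmt10_sum_deg_snd]; ring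
  have h3 : (stmt10P G).card = 2 * e := by
    rw [stmt10_card_P, SimpleGraph.sum_degrees_eq_twice_card_edges]
  have h2 : 2 * Q ≤ n * (2 * e) + 6 * t := by
    have := stmt10_sum_deg_le G
    rw [h1, h3, stmt10_count_key] at this
    simpa using this
  -- pass to reals
  have h2' : 2 * (Q : ℝ) ≤ (n : ℝ) * (2 * e) + 6 * t := by exact_mod_cast h2
  have h4' : (2 * (e : ℝ)) ^ 2 ≤ (n : ℝ) * Q := by
    have hcs := sq_sum_le_card_mul_sum_sq (s := (Finset.univ : Finset (Fin n)))
      (f := fun v => (G.degree v : ℝ))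
    have hsum : ∑ v, ((G.degree v : ℝ)) = 2 * e := by
      have h := SimpleGraph.sum_degrees_eq_twice_card_edges G
      rw [hedef]
      exact_mod_cast congrArg (Nat.cast : ℕ → ℝ) h
    have hsq : ∑ v, ((G.degree v : ℝ)) ^ 2 = (Q : ℝ) := by
      rw [hQdef]; push_cast; rfl

    rw [hsum, hsq, Finset.card_univ, Fintype.card_fin] at hcs
    exact hcs
  have hn0 : (0 : ℝ) < n := by exact_mod_cast hn
  rw [hecount] at he
  rw [htcount]
  have key : 2 * (e : ℝ) * (4 * e - (n : ℝ) ^ 2) ≤ 6 * (n : ℝ) * t := by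
    nlinarith [h4', h2', hn0]
  have he1 : (n : ℝ) ^ 2 / 4 + ε * (n : ℝ) ^ 2 ≤ (e : ℝ) := he
  have hpos : (0 : ℝ) < ε * (n : ℝ) ^ 2 := by positivity
  nlinarith [key, he1, hpos, hn0, mul_pos hε (pow_pos hn0 4),
    mul_pos (mul_pos hε hε) (pow_pos hn0 4)]
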